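/- (Uniform diameter bound for the frequency wedges.) Let d ≥ 2, A > 0, and let B ≥ 1 be an integer. For each integer m ≥ 1 let m* be the unique power of 2 with m ≤ m* < 2m, and define the wedge W_m = {ξ ∈ ℝ^d : A(m−1) ≤ |ξ| ≤ A(m+1) and the angle between ξ and the first standard basis vector e₁ is at most 2π/(m*B)} (with the convention that ξ = 0 belongs to W_m only when m = 1). Then there exists a constant C > 0, depending only on A, B, and d, such that for every m ≥ 1 with m*B ≥ 4 and all ξ, ζ ∈ W_m, |ξ − ζ| ≤ C; i.e., the Euclidean diameters of the wedges W_m with m*B ≥ 4 are bounded uniformly in m. -/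

import Mathlib

open Real InnerProductGeometry

noncomputable section

/-- `m*`: the unique power of two with `m ≤ m* < 2m`. -/
def mstar (m : ℕ) : ℕ := 2 ^ Nat.clog 2 m

/-- The wedge `W_m ⊆ ℝ^d` of points `ξ` with `A(m−1) ≤ |ξ| ≤ A(m+1)` whose angle with the
first standard basis vector `e₁` is at most `2π/(m*B)`, with the convention that `ξ = 0`
belongs to `W_m` only when `m = 1`. -/
def wedge (d : ℕ) (hd : 0 < d) (A : ℝ) (B m : ℕ) : Set (EuclideanSpace ℝ (Fin d)) :=
  {ξ | (ξ ≠ 0 ∧ A * ((m : ℝ) - 1) ≤ ‖ξ‖ ∧ ‖ξ‖ ≤ A * ((m : ℝ) + 1) ∧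
          angle ξ (EuclideanSpace.single (⟨0, hd⟩ : Fin d) (1 : ℝ)) ≤ 2 * π / (mstar m * B)) ∨
        (ξ = 0 ∧ m = 1)}

set_option maxHeartbeats 1000000 in
/-- uniform diameter bound for the frequency wedges: for `d ≥ 2`,
`A > 0`, and an integer `B ≥ 1`, there exists `C > 0`, depending only on `A`, `B`, `d`,
such that for every `m ≥ 1` with `m*B ≥ 4` and all `ξ, ζ ∈ W_m`, `|ξ − ζ| ≤ C`. -/
theorem wedge_diameter_bound (d : ℕ) (hd : 2 ≤ d) (A : ℝ) (hA : 0 < A)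
    (B : ℕ) (hB : 1 ≤ B) :
    ∃ C > (0 : ℝ), ∀ m : ℕ, 1 ≤ m → 4 ≤ mstar m * B →
      ∀ ξ ∈ wedge d (by omega) A B m, ∀ ζ ∈ wedge d (by omega) A B m, ‖ξ - ζ‖ ≤ C := by
  have hd0 : 0 < d := by omega
  refine ⟨2 * A + 8 * π * A, by positivity, ?_⟩
  intro m hm h4 ξ hξ ζ hζ
  set e : EuclideanSpace ℝ (Fin d) := EuclideanSpace.single (⟨0, hd0⟩ : Fin d) (1 : ℝ) with he
  have hne : ‖e‖ = 1 := by simp [he]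
  have hπ : (0:ℝ) < π := Real.pi_pos
  have hm1 : (1:ℝ) ≤ (m:ℝ) := by exact_mod_cast hm
  have hmsB : (m:ℝ) ≤ (mstar m : ℝ) * B := by
    have h1 : m ≤ mstar m := Nat.le_pow_clog one_lt_two m
    have : m ≤ mstar m * B := le_trans h1 (Nat.le_mul_of_pos_right _ (by omega))
    exact_mod_cast this
  -- Key bound: for nonzero ξ in the wedge, ‖ξ - ‖ξ‖ • e‖ ≤ 4 * π * A
  have key : ∀ ξ : EuclideanSpace ℝ (Fin d), ξ ≠ 0 → ‖ξ‖ ≤ A * ((m:ℝ) + 1) →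
      angle ξ e ≤ 2 * π / ((mstar m : ℝ) * B) → ‖ξ - ‖ξ‖ • e‖ ≤ 4 * π * A := by
    intro ξ hξ0 hub hang
    set θ := angle ξ e with hθ
    have hθ0 : 0 ≤ θ := angle_nonneg _ _
    have hip : Real.cos θ * (‖ξ‖ * ‖e‖) = inner ℝ ξ e :=
      InnerProductGeometry.cos_angle_mul_norm_mul_norm ξ e
    have hnormsq : ‖ξ - ‖ξ‖ • e‖ ^ 2 = 2 * ‖ξ‖ ^ 2 * (1 - Real.cos θ) := by
      rw [← real_inner_self_eq_norm_sq (ξ - ‖ξ‖ • e), inner_sub_sub_self]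
      simp only [real_inner_smul_left, real_inner_smul_right]
      rw [real_inner_self_eq_norm_sq ξ, real_inner_self_eq_norm_sq e,
        real_inner_comm ξ e, ← hip, hne]
      ring
    have hcos : 1 - Real.cos θ ≤ θ ^ 2 / 2 := by
      have := Real.one_sub_sq_div_two_le_cos (x := θ)
      linarith
    have hsq : ‖ξ - ‖ξ‖ • e‖ ^ 2 ≤ (‖ξ‖ * θ) ^ 2 := by
      rw [hnormsq]
      have h1 : 2 * ‖ξ‖ ^ 2 * (1 - Real.cos θ) ≤ 2 * ‖ξ‖ ^ 2 * (θ ^ 2 / 2) :=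
        mul_le_mul_of_nonneg_left hcos (by positivity)
      calc 2 * ‖ξ‖ ^ 2 * (1 - Real.cos θ) ≤ 2 * ‖ξ‖ ^ 2 * (θ ^ 2 / 2) := h1
        _ = (‖ξ‖ * θ) ^ 2 := by ring
    have h1 : ‖ξ - ‖ξ‖ • e‖ ≤ ‖ξ‖ * θ := by
      have h2 : (0:ℝ) ≤ ‖ξ‖ * θ := mul_nonneg (norm_nonneg _) hθ0
      nlinarith [norm_nonneg (ξ - ‖ξ‖ • e)]
    refine h1.trans ?_
    -- ‖ξ‖ * θ ≤ A (m+1) * (2π/(m* B)) ≤ A * 2m * (2π/m) = 4πA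
    have hθub : θ ≤ 2 * π / ((mstar m : ℝ) * B) := hang
    have hmB0 : (0:ℝ) < (mstar m : ℝ) * B := lt_of_lt_of_le (by linarith) hmsB
    have h3 : ‖ξ‖ * θ ≤ (A * ((m:ℝ) + 1)) * (2 * π / ((mstar m : ℝ) * B)) := by
      apply mul_le_mul hub hθub hθ0 (by positivity)
    refine h3.trans ?_
    have heq : A * ((m:ℝ) + 1) * (2 * π / ((mstar m : ℝ) * B))
        = (2 * π * A * ((m:ℝ) + 1)) / ((mstar m : ℝ) * B) := by ring
    rw [heq, div_le_iff₀ hmB0]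
    calc 2 * π * A * ((m:ℝ) + 1) ≤ 2 * π * A * (2 * (m:ℝ)) := by
          have : (m:ℝ) + 1 ≤ 2 * (m:ℝ) := by linarith
          have h0 : (0:ℝ) ≤ 2 * π * A := by positivity
          nlinarith
      _ = 4 * π * A * (m:ℝ) := by ring
      _ ≤ 4 * π * A * ((mstar m : ℝ) * B) := by
          have h0 : (0:ℝ) ≤ 4 * π * A := by positivity
          nlinarith
  -- The middle term: difference of norms
  rcases hξ with ⟨hξ0, hξlb, hξub, hξang⟩ | ⟨hξ0, hm1'⟩
  · rcases hζ with ⟨hζ0, hζlb, hζub, hζang⟩ | ⟨hζ0, hm1'⟩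
    · have k1 := key ξ hξ0 hξub hξang
      have k2 := key ζ hζ0 hζub hζang
      have hmid : ‖(‖ξ‖ • e : EuclideanSpace ℝ (Fin d)) - ‖ζ‖ • e‖ ≤ 2 * A := by
        rw [← sub_smul, norm_smul, hne, mul_one]
        rw [Real.norm_eq_abs, abs_le]
        constructor <;> nlinarith
      have tri := dist_triangle4 ξ (‖ξ‖ • e) (‖ζ‖ • e) ζ
      rw [dist_eq_norm, dist_eq_norm, dist_eq_norm, dist_eq_norm] at tri
      have k2' : ‖(‖ζ‖ • e : EuclideanSpace ℝ (Fin d)) - ζ‖ ≤ 4 * π * A := by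
        rw [norm_sub_rev]; exact k2
      linarith
    · subst hζ0 hm1'
      have := key ξ hξ0 hξub hξang
      have : ‖ξ‖ ≤ A * 2 := by norm_num at hξub ⊢; linarith
      rw [sub_zero]
      nlinarith
  · subst hξ0 hm1'
    rcases hζ with ⟨hζ0, hζlb, hζub, hζang⟩ | ⟨hζ0, _⟩
    · have : ‖ζ‖ ≤ A * 2 := by norm_num at hζub ⊢; linarith
      rw [zero_sub, norm_neg]
      nlinarith
    · subst hζ0; simp; positivity

end
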